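/- Let G be a Polish group acting on a set X, let 𝒱 be a family of open subgroups of G, and let ℬ be a family of subsets of X such that (i) every B ∈ ℬ is invariant under some member of 𝒱 (i.e., there is V ∈ 𝒱 with v • B = B for all v ∈ V), and (ii) for every B ∈ ℬ, every V ∈ 𝒱 and every g ∈ G, the Vaught *-transform B^{*(V·g)} of B with respect to the right coset V·g = {v * g : v ∈ V} belongs to ℬ. Then ℬ is G-invariant: for every g ∈ G and B ∈ ℬ, the set g • B belongs to ℬ. -/

import Mathlib

open Pointwise

/-- The Vaught *-transform of `B ⊆ X` with respect to a subset `U` of the acting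
group `G`: the set of `x ∈ X` such that `{g ∈ U : g • x ∈ B}` is comeagre in the
subspace `U`. -/
def vaughtStar {G X : Type*} [Group G] [TopologicalSpace G] [MulAction G X]
    (U : Set G) (B : Set X) : Set X :=
  {x : X | {u : U | (u : G) • x ∈ B} ∈ residual U}

/-- Let `G` be a Polish group acting on a set `X`, let `𝒱` be a
family of open subgroups of `G`, and let `ℬ` be a family of subsets of `X` such
that (i) every `B ∈ ℬ` is invariant under some member of `𝒱`, and (ii) for every
`B ∈ ℬ`, `V ∈ 𝒱` and `g ∈ G`, the Vaught *-transform of `B` with respect to the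
right coset `V·g` belongs to `ℬ`. Then `ℬ` is `G`-invariant: `g • B ∈ ℬ` for all
`g ∈ G`, `B ∈ ℬ`. -/
theorem family_invariant_of_closed_under_vaught_star
    {G X : Type*} [Group G] [TopologicalSpace G] [IsTopologicalGroup G] [PolishSpace G]
    [MulAction G X]
    (𝒱 : Set (Subgroup G)) (h𝒱 : ∀ V ∈ 𝒱, IsOpen (V : Set G))
    (ℬ : Set (Set X))
    (hinv : ∀ B ∈ ℬ, ∃ V ∈ 𝒱, ∀ v ∈ V, v • B = B)
    (hstar : ∀ B ∈ ℬ, ∀ V ∈ 𝒱, ∀ g : G,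
      vaughtStar ((fun v : G => v * g) '' (V : Set G)) B ∈ ℬ) :
    ∀ g : G, ∀ B ∈ ℬ, g • B ∈ ℬ := by
  intro g B hB
  obtain ⟨V, hV𝒱, hVinv⟩ := hinv B hB
  have key : g • B = vaughtStar ((fun v : G => v * g⁻¹) '' (V : Set G)) B := by
    ext x
    set U : Set G := (fun v : G => v * g⁻¹) '' (V : Set G) with hU
    have hUopen : IsOpen U := (isOpenMap_mul_right g⁻¹) _ (h𝒱 V hV𝒱)
    haveI hUpolish : PolishSpace U := hUopen.polishSpace
    letI := TopologicalSpace.upgradeIsCompletelyMetrizable U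
    haveI : Nonempty U := ⟨⟨1 * g⁻¹, ⟨1, V.one_mem, rfl⟩⟩⟩
    have hiff : ∀ u : U, ((u : G) • x ∈ B ↔ g⁻¹ • x ∈ B) := by
      rintro ⟨u, v, hv, rfl⟩
      simp only [mul_smul]
      conv_lhs => rw [← hVinv v hv]
      exact Set.smul_mem_smul_set_iff
    by_cases h : g⁻¹ • x ∈ B
    · have : {u : U | (u : G) • x ∈ B} = Set.univ := by
        ext u; simp [hiff u, h]
      simp only [vaughtStar, Set.mem_setOf_eq, this, Set.mem_smul_set_iff_inv_smul_mem]
      simp [h, Filter.univ_mem]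
    · have hempty : {u : U | (u : G) • x ∈ B} = ∅ := by
        ext u; simp [hiff u, h]
      simp only [vaughtStar, Set.mem_setOf_eq, hempty, Set.mem_smul_set_iff_inv_smul_mem]
      constructor
      · intro hx; exact absurd hx h
      · intro hres
        have := (dense_of_mem_residual hres).nonempty
        simp at this
  rw [key]
  exact hstar B hB V hV𝒱 g⁻¹
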